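/- Let F be a field of characteristic different from 2, t ∈ F, and let D_t be the four-dimensional superalgebra over F: the F-vector space with basis e₁, e₂, x, y and bilinear multiplication determined by e₁·e₁ = e₁, e₂·e₂ = e₂, e₁·e₂ = e₂·e₁ = 0, eᵢ·x = x·eᵢ = (1/2)x and eᵢ·y = y·eᵢ = (1/2)y for i = 1, 2, x·y = e₁ + t·e₂, y·x = −(e₁ + t·e₂), x·x = y·y = 0. If φ is a non-trivial δ-derivation of D_t (i.e. a δ-derivation that is neither a derivation of D_t nor a linear map vanishing on all products D_t·D_t), then δ = 1/2 and there exists α ∈ F such that φ(a) = α·a for all a ∈ D_t. -/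

import Mathlib

/-- The multiplication of the four-dimensional superalgebra `D_t` in
coordinates: `(a₁, a₂, b, c)` stands for `a₁e₁ + a₂e₂ + b·x + c·y`, with
`e₁e₁ = e₁`, `e₂e₂ = e₂`, `e₁e₂ = e₂e₁ = 0`, `eᵢx = xeᵢ = (1/2)x`,
`eᵢy = yeᵢ = (1/2)y` (`i = 1,2`), `xy = e₁ + t·e₂`, `yx = −(e₁ + t·e₂)`,
`xx = yy = 0`. -/
def DtMul {F : Type*} [Field F] (t : F) (a b : F × F × F × F) : F × F × F × F :=
  (a.1 * b.1 + (a.2.2.1 * b.2.2.2 - a.2.2.2 * b.2.2.1),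
   a.2.1 * b.2.1 + t * (a.2.2.1 * b.2.2.2 - a.2.2.2 * b.2.2.1),
   (1 / 2 : F) * ((a.1 + a.2.1) * b.2.2.1 + (b.1 + b.2.1) * a.2.2.1),
   (1 / 2 : F) * ((a.1 + a.2.1) * b.2.2.2 + (b.1 + b.2.1) * a.2.2.2))

/-- **δ-derivations of the superalgebras `D_t`.**
Let `F` be a field of characteristic not `2`, `t ∈ F`, `δ ∈ F` and `φ` a
`δ`-derivation of `D_t`.  If `φ` is non-trivial (neither a derivation nor
vanishing on all products), then `δ = 1/2` and `φ a = α • a` for some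
`α ∈ F`. -/
theorem delta_derivation_of_Dt
    {F : Type*} [Field F] (hchar : (2 : F) ≠ 0) (t : F)
    (δ : F) (φ : (F × F × F × F) →ₗ[F] (F × F × F × F))
    (hφ : ∀ a b : F × F × F × F,
      φ (DtMul t a b) = δ • (DtMul t (φ a) b + DtMul t a (φ b)))
    (hnotder : ¬ ∀ a b : F × F × F × F,
      φ (DtMul t a b) = DtMul t (φ a) b + DtMul t a (φ b))
    (hnotvanish : ¬ ∀ a b : F × F × F × F, φ (DtMul t a b) = 0) :
    δ = 1 / 2 ∧ ∃ α : F, ∀ a : F × F × F × F, φ a = α • a := by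
  set u : F × F × F × F := ((1:F),(1:F),(0:F),(0:F)) with hu
  have hul : ∀ a : F × F × F × F, DtMul t u a = a := by
    intro a; obtain ⟨a1,a2,b,c⟩ := a
    simp only [DtMul, hu, Prod.mk.injEq]
    refine ⟨by ring, by ring, by field_simp; ring, by field_simp; ring⟩
  have hur : ∀ a : F × F × F × F, DtMul t a u = a := by
    intro a; obtain ⟨a1,a2,b,c⟩ := a
    simp only [DtMul, hu, Prod.mk.injEq]
    refine ⟨by ring, by ring, by field_simp; ring, by field_simp; ring⟩
  by_cases hδ : δ = 1/2
  · refine ⟨hδ, ?_⟩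
    subst hδ
    have key : ∀ a : F × F × F × F, φ a = DtMul t (φ u) a := by
      intro a
      have h := hφ u a
      rw [hul a, hul (φ a)] at h
      obtain ⟨v1,v2,v3,v4,hv⟩ : ∃ v1 v2 v3 v4, φ a = (v1,v2,v3,v4) :=
        ⟨_,_,_,_, rfl⟩
      obtain ⟨w1,w2,w3,w4,hw⟩ : ∃ w1 w2 w3 w4, DtMul t (φ u) a = (w1,w2,w3,w4) :=
        ⟨_,_,_,_, rfl⟩
      rw [hv, hw] at h ⊢
      simp only [Prod.mk_add_mk, Prod.smul_mk, smul_eq_mul, Prod.mk.injEq] at h ⊢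
      obtain ⟨h1,h2,h3,h4⟩ := h
      field_simp [hchar] at h1 h2 h3 h4
      refine ⟨by linear_combination h1, by linear_combination h2,
        by linear_combination h3, by linear_combination h4⟩
    obtain ⟨p,q,r,s,hz⟩ : ∃ p q r s, φ u = (p,q,r,s) := ⟨_,_,_,_, rfl⟩
    have key' : ∀ a : F × F × F × F, φ a = DtMul t (p,q,r,s) a := by
      intro a; rw [key a, hz]
    have h1 := hφ ((1:F),(0:F),(0:F),(0:F)) ((1:F),(0:F),(0:F),(0:F))
    simp only [key'] at h1
    simp only [DtMul, Prod.mk_add_mk, Prod.smul_mk, smul_eq_mul,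
      Prod.mk.injEq] at h1
    have hxy := hφ ((0:F),(0:F),(1:F),(0:F)) ((0:F),(0:F),(0:F),(1:F))
    simp only [key'] at hxy
    simp only [DtMul, Prod.mk_add_mk, Prod.smul_mk, smul_eq_mul,
      Prod.mk.injEq] at hxy
    obtain ⟨-, -, h1r, h1s⟩ := h1
    obtain ⟨hxy1, -⟩ := hxy
    field_simp [hchar] at h1r h1s hxy1
    have h22 : (2:F) * 2 ≠ 0 := mul_ne_zero hchar hchar
    have hr : r = 0 := by
      have h : r * (2 * 2) = 0 := by linear_combination 2 * h1r
      exact (mul_eq_zero.mp h).resolve_right h22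
    have hs : s = 0 := by
      have h : s * (2 * 2) = 0 := by linear_combination 2 * h1s
      exact (mul_eq_zero.mp h).resolve_right h22
    have hq : q = p := by
      have h : (q - p) * 2 = 0 := by linear_combination -hxy1
      have := (mul_eq_zero.mp h).resolve_right hchar
      linear_combination this
    refine ⟨p, fun a => ?_⟩
    rw [key' a]
    obtain ⟨a1,a2,b,c⟩ := a
    subst hq hr hs
    simp only [DtMul, Prod.smul_mk, smul_eq_mul, Prod.mk.injEq]
    refine ⟨by ring, by ring, by field_simp; ring, by field_simp; ring⟩
  · exfalso
    have hz : φ u = 0 := by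
      have h := hφ u u
      rw [hul u, hul (φ u), hur (φ u)] at h
      have h2 : ((1:F) - 2*δ) • φ u = 0 := by
        calc ((1:F) - 2*δ) • φ u = φ u - (2*δ) • φ u := by module
          _ = φ u - δ • (φ u + φ u) := by module
          _ = φ u - φ u := by rw [← h]
          _ = 0 := sub_self _
      have hne : (1:F) - 2*δ ≠ 0 := by
        intro h0; apply hδ; field_simp; linear_combination -h0
      exact (smul_eq_zero.mp h2).resolve_left hne
    by_cases hδ1 : δ = 1
    · exact hnotder fun a b => by
        have h := hφ a b; rw [hδ1, one_smul] at h; exact h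
    · have hz0 : ∀ a : F × F × F × F, φ a = 0 := by
        intro a
        have h := hφ u a
        rw [hul a, hul (φ a), hz] at h
        have hD : DtMul t (0 : F × F × F × F) a = 0 := by
          obtain ⟨a1,a2,b,c⟩ := a
          simp [DtMul, Prod.mk.injEq]
        rw [hD, zero_add] at h
        have h2 : ((1:F) - δ) • φ a = 0 := by
          calc ((1:F) - δ) • φ a = φ a - δ • φ a := by module
            _ = φ a - φ a := by rw [← h]
            _ = 0 := sub_self _
        have hne : (1:F) - δ ≠ 0 := sub_ne_zero_of_ne (Ne.symm hδ1)
        exact (smul_eq_zero.mp h2).resolve_left hne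
      exact hnotvanish fun a b => hz0 _
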